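/- For a linear program min cᵀx subject to x ∈ M (where M is defined by finitely many linear equalities/inequalities) and its dual max bᵀy subject to y ∈ N, the duality gap is zero if and only if at least one of the primal or the dual program is feasible. -/

import Mathlib

open Matrix

section Aux
set_option linter.unusedSectionVars false


variable {I J : Type*} [Fintype I] [Fintype J]

/-- column of a matrix -/
def colS (A : Matrix I J ℝ) (j : J) : I → ℝ := fun i => A i j

lemma mulVec_eq_sum' (A : Matrix I J ℝ) (x : J → ℝ) :
    A.mulVec x = ∑ j, x j • colS A j := by
  funext i
  simp [Matrix.mulVec, dotProduct, colS, Finset.sum_apply, mul_comm]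

/-- Carathéodory-type reduction: every point of a finitely generated cone is a nonnegative
combination of a linearly independent subfamily of the generators. -/
lemma cara (A : Matrix I J ℝ) (x : J → ℝ) (hx : 0 ≤ x) :
    ∃ x' : J → ℝ, 0 ≤ x' ∧ A.mulVec x' = A.mulVec x ∧
      LinearIndependent ℝ (fun j : {j : J // x' j ≠ 0} => colS A j) := by
  classical
  obtain ⟨k, hk⟩ : ∃ k, (Finset.univ.filter fun j => x j ≠ 0).card ≤ k := ⟨_, le_rfl⟩
  induction k generalizing x with
  | zero =>
    have hemp : ∀ j, x j = 0 := by
      intro j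
      by_contra h
      have : j ∈ Finset.univ.filter fun j => x j ≠ 0 := by simp [h]
      have := Finset.card_pos.mpr ⟨j, this⟩
      omega
    refine ⟨x, hx, rfl, ?_⟩
    have : IsEmpty {j : J // x j ≠ 0} := ⟨fun j => j.2 (hemp j.1)⟩
    exact linearIndependent_empty_type
  | succ k ih =>
    by_cases hli : LinearIndependent ℝ (fun j : {j : J // x j ≠ 0} => colS A j)
    · exact ⟨x, hx, rfl, hli⟩
    · obtain ⟨g, hg0, j₀, hj₀⟩ := Fintype.not_linearIndependent_iff.mp hli
      -- WLOG some coefficient is positive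
      obtain ⟨g, hg0, j₁, hj₁⟩ :
          ∃ g : {j : J // x j ≠ 0} → ℝ,
            ∑ j, g j • colS A j.1 = 0 ∧ ∃ j, 0 < g j := by
        rcases lt_or_gt_of_ne hj₀ with h | h
        · refine ⟨-g, by simpa using hg0, j₀, by simpa using h⟩
        · exact ⟨g, hg0, j₀, h⟩
      set d : J → ℝ := fun j => if h : x j ≠ 0 then g ⟨j, h⟩ else 0 with hd
      have hAd : A.mulVec d = 0 := by
        rw [mulVec_eq_sum']
        rw [← Finset.sum_filter_of_ne (p := fun j => x j ≠ 0)
          (by intro j _ h; by_contra hxj; exact h (by simp [hd, hxj]))]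
        rw [Finset.sum_subtype (p := fun j => x j ≠ 0) (Finset.univ.filter fun j => x j ≠ 0)
          (by simp) (fun j => d j • colS A j), ← hg0]
        refine Finset.sum_congr rfl fun j _ => ?_
        simp [hd, j.2]
      -- the set of indices with positive coefficient
      have hT : (Finset.univ.filter fun j => 0 < d j).Nonempty := by
        refine ⟨j₁.1, ?_⟩
        simp only [Finset.mem_filter, Finset.mem_univ, true_and, hd]
        rw [dif_pos j₁.2]
        simpa using hj₁
      obtain ⟨j₂, hj₂mem, hj₂min⟩ := Finset.exists_min_image _ (fun j => x j / d j) hT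
      have hdj₂ : 0 < d j₂ := by simpa using hj₂mem
      set t : ℝ := x j₂ / d j₂ with ht
      have ht0 : 0 ≤ t := div_nonneg (hx j₂) hdj₂.le
      set x' : J → ℝ := x - t • d with hx'
      have hx'0 : 0 ≤ x' := by
        intro j
        simp only [hx', Pi.sub_apply, Pi.smul_apply, smul_eq_mul, Pi.zero_apply]
        rcases le_or_gt (d j) 0 with h | h
        · have h1 : 0 ≤ t * -d j := mul_nonneg ht0 (by linarith)
          have h2 : (0:ℝ) ≤ x j := hx j
          linarith
        · have : t ≤ x j / d j := hj₂min j (by simpa using h)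
          rw [sub_nonneg]
          calc t * d j ≤ (x j / d j) * d j := by nlinarith
          _ = x j := div_mul_cancel₀ _ h.ne'
      have hsubset : ∀ j, x' j ≠ 0 → x j ≠ 0 := by
        intro j hj
        by_contra hxj
        apply hj
        have : d j = 0 := by simp [hd, hxj]
        simp [hx', hxj, this]
      have hx'j₂ : x' j₂ = 0 := by
        simp only [hx', Pi.sub_apply, Pi.smul_apply, smul_eq_mul, ht]
        field_simp
        ring
      have hcard : (Finset.univ.filter fun j => x' j ≠ 0).card ≤ k := by
        have h1 : (Finset.univ.filter fun j => x' j ≠ 0) ⊆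
            (Finset.univ.filter fun j => x j ≠ 0).erase j₂ := by
          intro j hj
          simp only [Finset.mem_filter, Finset.mem_univ, true_and] at hj
          refine Finset.mem_erase.mpr ⟨?_, by simp [hsubset j hj]⟩
          rintro rfl; exact hj hx'j₂
        have hj₂' : j₂ ∈ Finset.univ.filter fun j => x j ≠ 0 := by
          simp only [Finset.mem_filter, Finset.mem_univ, true_and]
          intro hxj; rw [hd] at hdj₂; simp [hxj] at hdj₂
        have := Finset.card_le_card h1
        rw [Finset.card_erase_of_mem hj₂'] at this
        omega
      obtain ⟨x'', h1, h2, h3⟩ := ih x' hx'0 hcard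
      refine ⟨x'', h1, ?_, h3⟩
      rw [h2, hx']
      rw [sub_eq_add_neg, ← neg_smul, Matrix.mulVec_add, Matrix.mulVec_smul, hAd]
      simp


def feasCone (A : Matrix I J ℝ) : Set (I → ℝ) := {b | ∃ x, 0 ≤ x ∧ A.mulVec x = b}

lemma isClosed_nonneg' {ι : Type*} [Fintype ι] : IsClosed {x : ι → ℝ | 0 ≤ x} := by
  have : {x : ι → ℝ | 0 ≤ x} = Set.Ici 0 := rfl
  rw [this]; exact isClosed_Ici

lemma isClosed_feasCone (A : Matrix I J ℝ) : IsClosed (feasCone A) := by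
  classical
  let L : (s : Finset J) → ({j // j ∈ s} → ℝ) →ₗ[ℝ] (I → ℝ) := fun s =>
    { toFun := fun x => ∑ j : {j // j ∈ s}, x j • colS A j.1
      map_add' := by intro u v; simp [add_smul, Finset.sum_add_distrib]
      map_smul' := by intro r u; simp [smul_smul, Finset.smul_sum] }
  have key : feasCone A =
      ⋃ s : {s : Finset J // LinearIndependent ℝ (fun j : {j // j ∈ s} => colS A j.1)},
      (L s.1) '' {x | 0 ≤ x} := by
    ext v
    constructor
    · rintro ⟨x, hx, rfl⟩
      obtain ⟨x', hx'0, hx'eq, hli⟩ := cara A x hx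
      set s : Finset J := Finset.univ.filter fun j => x' j ≠ 0 with hs
      have hmem : ∀ j : J, j ∈ s ↔ x' j ≠ 0 := by simp [hs]
      have hli' : LinearIndependent ℝ (fun j : {j // j ∈ s} => colS A j.1) := by
        have h2 : (fun j : {j // j ∈ s} => colS A j.1)
            = (fun j : {j : J // x' j ≠ 0} => colS A j.1) ∘ (Equiv.subtypeEquivRight hmem) := by
          funext j; rfl
        rw [h2]
        exact hli.comp _ (Equiv.injective _)
      refine Set.mem_iUnion.mpr ⟨⟨s, hli'⟩, (fun j => x' j.1), fun j => hx'0 j.1, ?_⟩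
      show ∑ j : {j // j ∈ s}, x' j.1 • colS A j.1 = A.mulVec x
      rw [← hx'eq, mulVec_eq_sum']
      rw [Finset.sum_coe_sort s (fun j => x' j • colS A j)]
      refine Finset.sum_subset (Finset.subset_univ s) fun j _ hj => ?_
      rw [hmem, not_ne_iff] at hj
      simp [hj]
    · intro hv
      rw [Set.mem_iUnion] at hv
      obtain ⟨⟨s, hli⟩, x, hx, rfl⟩ := hv
      refine ⟨fun j => if h : j ∈ s then x ⟨j, h⟩ else 0, fun j => ?_, ?_⟩
      · dsimp only
        split
        · exact hx _
        · exact le_refl _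
      · rw [mulVec_eq_sum']
        show _ = ∑ j : {j // j ∈ s}, x j • colS A j.1
        have hR : ∑ j : {j // j ∈ s}, x j • colS A j.1
            = ∑ j : {j // j ∈ s},
              (fun j' => (if h : j' ∈ s then x ⟨j', h⟩ else 0) • colS A j') j.1 := by
          refine Finset.sum_congr rfl fun j _ => ?_
          simp only [dif_pos j.2]
        rw [hR, Finset.sum_coe_sort s
          (fun j' => (if h : j' ∈ s then x ⟨j', h⟩ else 0) • colS A j')]
        exact (Finset.sum_subset (Finset.subset_univ s) (fun j _ hj => by simp [hj])).symm
  rw [key]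
  apply isClosed_iUnion_of_finite
  rintro ⟨s, hli⟩
  have hinj : LinearMap.ker (L s) = ⊥ := by
    rw [LinearMap.ker_eq_bot]
    intro u v huv
    have h0 := Fintype.linearIndependent_iff.mp hli (u - v) (by
      simpa [L, sub_smul, Finset.sum_sub_distrib] using sub_eq_zero.mpr huv)
    funext j
    simpa [sub_eq_zero] using h0 j
  exact ((L s).isClosedEmbedding_of_injective hinj).isClosedMap _ isClosed_nonneg'

lemma farkas_neg [DecidableEq J] (A : Matrix I J ℝ) (b : I → ℝ)
    (h : ¬ ∃ x, 0 ≤ x ∧ A.mulVec x = b) :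
    ∃ y : I → ℝ, 0 ≤ Aᵀ.mulVec y ∧ b ⬝ᵥ y < 0 := by
  classical
  let E := EuclideanSpace ℝ I
  let K : ProperCone ℝ E :=
    { carrier := {v : E | WithLp.ofLp v ∈ feasCone A}
      zero_mem' := ⟨0, le_refl _, by simp⟩
      add_mem' := by
        rintro v w ⟨x, hx, hxv⟩ ⟨z, hz, hzw⟩
        exact ⟨x + z, fun j => add_nonneg (hx j) (hz j), by rw [Matrix.mulVec_add, hxv, hzw]; rfl⟩
      smul_mem' := by
        rintro t v ⟨x, hx, hxv⟩
        exact ⟨(t : ℝ) • x, fun j => mul_nonneg t.2 (hx j),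
          by rw [Matrix.mulVec_smul, hxv]; rfl⟩
      isClosed' := (isClosed_feasCone A).preimage (PiLp.continuous_ofLp 2 _) }
  have hbK : WithLp.toLp 2 b ∉ K := fun hb => h hb
  obtain ⟨y, hy1, hy2⟩ := ProperCone.hyperplane_separation' K hbK
  refine ⟨WithLp.ofLp y, fun j => ?_, ?_⟩
  · have hcol : WithLp.toLp 2 (colS A j) ∈ K :=
      ⟨Pi.single j 1, fun j' => by
        rw [Pi.single_apply]
        split <;> norm_num, by
        funext i; simp [colS, Matrix.mulVec, dotProduct, Pi.single_apply]⟩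
    have := hy1 _ hcol
    rw [PiLp.inner_apply] at this
    simpa [colS, Matrix.mulVec, dotProduct, Matrix.transpose_apply, mul_comm] using this
  · rw [PiLp.inner_apply] at hy2
    simpa [dotProduct, mul_comm] using hy2

lemma weak_dual (A : Matrix I J ℝ) {b : I → ℝ} {c : J → ℝ} {x : J → ℝ} {y : I → ℝ}
    (hx : 0 ≤ x) (hAx : A.mulVec x = b) (hy : Aᵀ.mulVec y ≤ c) : b ⬝ᵥ y ≤ c ⬝ᵥ x := by
  have h1 : b ⬝ᵥ y = (Aᵀ.mulVec y) ⬝ᵥ x := by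
    rw [← hAx, dotProduct_comm, dotProduct_mulVec, ← Matrix.mulVec_transpose]
  rw [h1, dotProduct, dotProduct]
  refine Finset.sum_le_sum fun j _ => ?_
  exact mul_le_mul_of_nonneg_right (hy j) (hx j)

/-- If the dual is infeasible, there is a primal recession direction with negative cost. -/
lemma dual_infeasible_ray [DecidableEq I] [DecidableEq J] (A : Matrix I J ℝ) (c : J → ℝ)
    (h : ¬ ∃ y : I → ℝ, Aᵀ.mulVec y ≤ c) :
    ∃ d : J → ℝ, 0 ≤ d ∧ A.mulVec d = 0 ∧ c ⬝ᵥ d < 0 := by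
  classical
  let M : Matrix J ((I ⊕ I) ⊕ J) ℝ := fun j k =>
    Sum.elim (Sum.elim (fun i => A i j) (fun i => -A i j)) (fun j' => if j' = j then 1 else 0) k
  have hM : ¬ ∃ u, 0 ≤ u ∧ M.mulVec u = c := by
    rintro ⟨u, hu, huc⟩
    refine h ⟨fun i => u (Sum.inl (Sum.inl i)) - u (Sum.inl (Sum.inr i)), fun j => ?_⟩
    have hj := congrFun huc j
    rw [Matrix.mulVec, dotProduct, Fintype.sum_sum_type, Fintype.sum_sum_type] at hj
    have hsingle : ∑ j' : J, M j (Sum.inr j') * u (Sum.inr j') = u (Sum.inr j) := by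
      simp [M]
    rw [hsingle] at hj
    have hTy : Aᵀ.mulVec (fun i => u (Sum.inl (Sum.inl i)) - u (Sum.inl (Sum.inr i))) j
        = ∑ i, A i j * u (Sum.inl (Sum.inl i)) + ∑ i, (-A i j) * u (Sum.inl (Sum.inr i)) := by
      rw [Matrix.mulVec, dotProduct, ← Finset.sum_add_distrib]
      refine Finset.sum_congr rfl fun i _ => ?_
      simp [Matrix.transpose_apply]; ring
    rw [hTy]
    simp only [M, Sum.elim_inl, Sum.elim_inr] at hj
    have h0u : (0:ℝ) ≤ u (Sum.inr j) := hu (Sum.inr j)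
    linarith
  obtain ⟨z, hz1, hz2⟩ := farkas_neg M c hM
  have hz3 : ∀ k, 0 ≤ ∑ j, M j k * z j := fun k => by
    have := hz1 k
    rwa [Matrix.mulVec, dotProduct] at this
  have hpos : ∀ i, 0 ≤ A.mulVec z i := fun i => by
    have := hz3 (Sum.inl (Sum.inl i))
    simpa [M, Matrix.mulVec, dotProduct] using this
  have hneg : ∀ i, A.mulVec z i ≤ 0 := fun i => by
    have := hz3 (Sum.inl (Sum.inr i))
    simp only [M, Sum.elim_inl, Sum.elim_inr] at this
    have h2 : ∑ j, -A i j * z j = -∑ j, A i j * z j := by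
      rw [← Finset.sum_neg_distrib]; exact Finset.sum_congr rfl fun j _ => by ring
    rw [h2] at this
    have : ∑ j, A i j * z j ≤ 0 := by linarith
    simpa [Matrix.mulVec, dotProduct] using this
  have hz0 : 0 ≤ z := fun j => by
    have := hz3 (Sum.inr j)
    simpa [M] using this
  exact ⟨z, hz0, funext fun i => le_antisymm (hneg i) (hpos i), hz2⟩

lemma exists_dual_gt [DecidableEq I] [DecidableEq J] (A : Matrix I J ℝ) (b : I → ℝ) (c : J → ℝ)
    (x₀ : J → ℝ) (hx₀0 : 0 ≤ x₀) (hx₀A : A.mulVec x₀ = b) (γ : ℝ)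
    (hγ : ∀ x, 0 ≤ x → A.mulVec x = b → γ < c ⬝ᵥ x) :
    ∃ y, Aᵀ.mulVec y ≤ c ∧ γ < b ⬝ᵥ y := by
  classical
  let A' : Matrix (I ⊕ Unit) (J ⊕ Unit) ℝ := fun i j =>
    Sum.elim (fun i' => Sum.elim (A i') (fun _ => 0) j) (fun _ => Sum.elim c (fun _ => 1) j) i
  let b' : I ⊕ Unit → ℝ := Sum.elim b (fun _ => γ)
  have h' : ¬ ∃ u, 0 ≤ u ∧ A'.mulVec u = b' := by
    rintro ⟨u, hu, huc⟩
    set x := fun j => u (Sum.inl j) with hxdef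
    have hfeas : A.mulVec x = b := by
      funext i
      have hi := congrFun huc (Sum.inl i)
      rw [Matrix.mulVec, dotProduct, Fintype.sum_sum_type] at hi
      simpa [A', b', Matrix.mulVec, dotProduct] using hi
    have hlast := congrFun huc (Sum.inr ())
    rw [Matrix.mulVec, dotProduct, Fintype.sum_sum_type] at hlast
    simp only [A', b', Sum.elim_inr, Sum.elim_inl, one_mul] at hlast
    have hcx : c ⬝ᵥ x + u (Sum.inr ()) = γ := by
      rw [dotProduct]
      simpa using hlast
    have h1 := hγ x (fun j => hu (Sum.inl j)) hfeas
    have h2 : (0:ℝ) ≤ u (Sum.inr ()) := hu (Sum.inr ())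
    linarith
  obtain ⟨w, hw1, hw2⟩ := farkas_neg A' b' h'
  set y₁ := fun i => w (Sum.inl i) with hy₁def
  set t := w (Sum.inr ()) with htdef
  have comp1 : ∀ j, 0 ≤ Aᵀ.mulVec y₁ j + c j * t := fun j => by
    have := hw1 (Sum.inl j)
    rw [Matrix.mulVec, dotProduct, Fintype.sum_sum_type] at this
    simpa [A', Matrix.mulVec, dotProduct, Matrix.transpose, Matrix.of_apply] using this
  have comp2 : (0:ℝ) ≤ t := by
    have := hw1 (Sum.inr ())
    rw [Matrix.mulVec, dotProduct, Fintype.sum_sum_type] at this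
    simpa [A', Matrix.transpose, Matrix.of_apply] using this
  have comp3 : b ⬝ᵥ y₁ + γ * t < 0 := by
    rw [dotProduct, Fintype.sum_sum_type] at hw2
    simp only [b', Sum.elim_inl, Sum.elim_inr] at hw2
    rw [dotProduct]
    simpa [mul_comm] using hw2
  rcases eq_or_lt_of_le comp2 with hteq | htpos
  · exfalso
    have hbneg : b ⬝ᵥ y₁ < 0 := by rw [← hteq] at comp3; linarith
    have hbpos : 0 ≤ b ⬝ᵥ y₁ := by
      have h1 : b ⬝ᵥ y₁ = (Aᵀ.mulVec y₁) ⬝ᵥ x₀ := by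
        rw [← hx₀A, dotProduct_comm, dotProduct_mulVec, ← Matrix.mulVec_transpose]
      rw [h1, dotProduct]
      refine Finset.sum_nonneg fun j _ => mul_nonneg ?_ (hx₀0 j)
      have := comp1 j
      rw [← hteq] at this
      simpa using this
    linarith
  · refine ⟨(-t⁻¹) • y₁, fun j => ?_, ?_⟩
    · rw [Matrix.mulVec_smul]
      have hq := comp1 j
      have h4 : (-(Aᵀ.mulVec y₁ j))/t ≤ c j := by
        rw [div_le_iff₀ htpos]; linarith
      calc ((-t⁻¹) • Aᵀ.mulVec y₁) j = (-(Aᵀ.mulVec y₁ j))/t := by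
            simp [div_eq_mul_inv]; ring
        _ ≤ c j := h4
    · rw [dotProduct_smul]
      have h5 : γ < (-(b ⬝ᵥ y₁))/t := by
        rw [lt_div_iff₀ htpos]; linarith
      calc γ < (-(b ⬝ᵥ y₁))/t := h5
        _ = (-t⁻¹) • (b ⬝ᵥ y₁) := by simp [div_eq_mul_inv]; ring

lemma ereal_eq_bot_of_le_all {z : EReal} (h : ∀ r : ℝ, z ≤ (r : EReal)) : z = ⊥ := by
  by_contra hz
  have hbz : (⊥ : EReal) < z := bot_lt_iff_ne_bot.mpr hz
  obtain ⟨x, _, hx2⟩ := EReal.exists_between_coe_real hbz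
  exact absurd (lt_of_le_of_lt (h x) hx2) (lt_irrefl z)

lemma ereal_eq_top_of_ge_all {z : EReal} (h : ∀ r : ℝ, (r : EReal) ≤ z) : z = ⊤ := by
  by_contra hz
  have hbz : z < (⊤ : EReal) := lt_top_iff_ne_top.mpr hz
  obtain ⟨x, hx1, _⟩ := EReal.exists_between_coe_real hbz
  exact absurd (lt_of_lt_of_le hx1 (h x)) (lt_irrefl z)


end Aux



/-- Optimal value (in the extended reals) of the primal LP
`min cᵀx  s.t.  Ax = b, x ≥ 0`.  Infeasible = `⊤`, unbounded = `⊥`. -/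
noncomputable def primalValA {m n : ℕ} (A : Matrix (Fin m) (Fin n) ℝ) (b : Fin m → ℝ)
    (c : Fin n → ℝ) : EReal :=
  sInf ((fun x => ((c ⬝ᵥ x : ℝ) : EReal)) '' {x | A.mulVec x = b ∧ 0 ≤ x})

/-- Optimal value of the dual LP `max bᵀy  s.t.  Aᵀy ≤ c`.
Infeasible = `⊥`, unbounded = `⊤`. -/
noncomputable def dualValA {m n : ℕ} (A : Matrix (Fin m) (Fin n) ℝ) (b : Fin m → ℝ)
    (c : Fin n → ℝ) : EReal :=
  sSup ((fun y => ((b ⬝ᵥ y : ℝ) : EReal)) '' {y | Aᵀ.mulVec y ≤ c})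

/-- The duality gap is zero (primal value = dual value) iff the primal or
the dual program is feasible. -/
theorem lp_zero_duality_gap_iff_feasible {m n : ℕ} (A : Matrix (Fin m) (Fin n) ℝ)
    (b : Fin m → ℝ) (c : Fin n → ℝ) :
    primalValA A b c = dualValA A b c ↔
      ({x : Fin n → ℝ | A.mulVec x = b ∧ 0 ≤ x}.Nonempty ∨
       {y : Fin m → ℝ | Aᵀ.mulVec y ≤ c}.Nonempty) := by
  classical
  constructor
  · intro h
    by_contra hcon
    push_neg at hcon
    obtain ⟨hP, hD⟩ := hcon
    rw [primalValA, dualValA, hP, hD] at h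
    simp at h
  · intro hfeas
    by_cases hP : {x : Fin n → ℝ | A.mulVec x = b ∧ 0 ≤ x}.Nonempty
    · by_cases hD : {y : Fin m → ℝ | Aᵀ.mulVec y ≤ c}.Nonempty
      · -- both feasible : strong duality
        obtain ⟨x₀, hx₀A, hx₀0⟩ := hP
        obtain ⟨y₀, hy₀⟩ := hD
        have hDleP : dualValA A b c ≤ primalValA A b c := by
          refine sSup_le fun w hw => le_sInf fun v hv => ?_
          obtain ⟨y, hy, rfl⟩ := hw
          obtain ⟨x, ⟨hxA, hx0⟩, rfl⟩ := hv
          dsimp only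
          exact_mod_cast weak_dual A hx0 hxA hy
        have hnetop : primalValA A b c ≤ ((c ⬝ᵥ x₀ : ℝ) : EReal) :=
          sInf_le ⟨x₀, ⟨hx₀A, hx₀0⟩, rfl⟩
        have hnebot : ((b ⬝ᵥ y₀ : ℝ) : EReal) ≤ primalValA A b c := by
          refine le_sInf fun v hv => ?_
          obtain ⟨x, ⟨hxA, hx0⟩, rfl⟩ := hv
          dsimp only
          exact_mod_cast weak_dual A hx0 hxA hy₀
        have hptop : primalValA A b c ≠ ⊤ :=
          fun h => by rw [h] at hnetop; exact absurd (top_le_iff.mp hnetop) (EReal.coe_ne_top _)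
        have hpbot : primalValA A b c ≠ ⊥ :=
          fun h => by rw [h] at hnebot; exact absurd (le_bot_iff.mp hnebot) (EReal.coe_ne_bot _)
        set r : ℝ := (primalValA A b c).toReal with hrdef
        have hr : (r : EReal) = primalValA A b c := EReal.coe_toReal hptop hpbot
        refine le_antisymm ?_ hDleP
        rw [← hr]
        by_contra hlt
        push_neg at hlt
        obtain ⟨γ, hγ1, hγ2⟩ := EReal.exists_between_coe_real hlt
        -- γ < r, so every feasible x has cost > γ
        have hγr : γ < r := by exact_mod_cast hγ2
        have hall : ∀ x, 0 ≤ x → A.mulVec x = b → γ < c ⬝ᵥ x := by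
          intro x hx0 hxA
          have : (r : EReal) ≤ ((c ⬝ᵥ x : ℝ) : EReal) := by
            rw [hr]; exact sInf_le ⟨x, ⟨hxA, hx0⟩, rfl⟩
          have : r ≤ c ⬝ᵥ x := by exact_mod_cast this
          linarith
        obtain ⟨y, hyfeas, hygt⟩ := exists_dual_gt A b c x₀ hx₀0 hx₀A γ hall
        have : ((γ : ℝ) : EReal) ≤ dualValA A b c :=
          le_trans (show ((γ:ℝ):EReal) ≤ ((b ⬝ᵥ y : ℝ) : EReal) by exact_mod_cast hygt.le)
            (le_sSup ⟨y, hyfeas, rfl⟩)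
        exact absurd (lt_of_le_of_lt this hγ1) (lt_irrefl _)
      · -- primal feasible, dual infeasible : both values are ⊥
        obtain ⟨x₀, hx₀A, hx₀0⟩ := hP
        have hDempty : {y : Fin m → ℝ | Aᵀ.mulVec y ≤ c} = ∅ :=
          Set.not_nonempty_iff_eq_empty.mp hD
        have hdual : dualValA A b c = ⊥ := by
          rw [dualValA, hDempty]; simp
        obtain ⟨d, hd0, hdA, hdc⟩ := dual_infeasible_ray A c (by
          intro ⟨y, hy⟩; exact hD ⟨y, hy⟩)
        rw [hdual]
        apply ereal_eq_bot_of_le_all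
        intro ρ
        set q : ℝ := c ⬝ᵥ d with hq
        have hqneg : q < 0 := hdc
        obtain ⟨t, ht0, htval⟩ : ∃ t : ℝ, 0 ≤ t ∧ c ⬝ᵥ x₀ + t * q ≤ ρ := by
          rcases le_or_gt 0 ((ρ - c ⬝ᵥ x₀)/q) with h | h
          · refine ⟨(ρ - c ⬝ᵥ x₀)/q, h, ?_⟩
            rw [div_mul_cancel₀ _ hqneg.ne]
            linarith
          · refine ⟨0, le_refl _, ?_⟩
            rw [div_neg_iff] at h
            rcases h with ⟨h1, h2⟩ | ⟨h1, h2⟩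
            · linarith
            · linarith
        have hfeas : A.mulVec (x₀ + t • d) = b ∧ 0 ≤ x₀ + t • d := by
          constructor
          · rw [Matrix.mulVec_add, Matrix.mulVec_smul, hdA, hx₀A]; simp
          · intro j
            have h1 : (0:ℝ) ≤ x₀ j := hx₀0 j
            have h2 : (0:ℝ) ≤ d j := hd0 j
            have : (0:ℝ) ≤ x₀ j + t * d j := by positivity
            simpa using this
        have hval : c ⬝ᵥ (x₀ + t • d) = c ⬝ᵥ x₀ + t * q := by
          rw [dotProduct_add, dotProduct_smul]
          simp [hq, smul_eq_mul]
        refine sInf_le_of_le ⟨x₀ + t • d, hfeas, rfl⟩ ?_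
        dsimp only
        rw [hval]
        exact_mod_cast htval
    · -- primal infeasible
      have hD : {y : Fin m → ℝ | Aᵀ.mulVec y ≤ c}.Nonempty := hfeas.resolve_left hP
      obtain ⟨y₀, hy₀⟩ := hD
      have hPempty : {x : Fin n → ℝ | A.mulVec x = b ∧ 0 ≤ x} = ∅ :=
        Set.not_nonempty_iff_eq_empty.mp hP
      have hprimal : primalValA A b c = ⊤ := by
        rw [primalValA, hPempty]; simp
      obtain ⟨y', hy'0, hy'neg⟩ := farkas_neg A b (by
        rintro ⟨x, hx0, hxA⟩; exact hP ⟨x, hxA, hx0⟩)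
      rw [hprimal]
      symm
      apply ereal_eq_top_of_ge_all
      intro ρ
      set q : ℝ := -(b ⬝ᵥ y') with hq
      have hqpos : 0 < q := by simp [hq]; linarith
      obtain ⟨t, ht0, htval⟩ : ∃ t : ℝ, 0 ≤ t ∧ ρ ≤ b ⬝ᵥ y₀ + t * q := by
        rcases le_or_gt 0 ((ρ - b ⬝ᵥ y₀)/q) with h | h
        · refine ⟨(ρ - b ⬝ᵥ y₀)/q, h, ?_⟩
          rw [div_mul_cancel₀ _ hqpos.ne']
          linarith
        · refine ⟨0, le_refl _, ?_⟩
          rw [div_neg_iff] at h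
          rcases h with ⟨h1, h2⟩ | ⟨h1, h2⟩
          · linarith
          · linarith
      have hfeas : Aᵀ.mulVec (y₀ + t • (-y')) ≤ c := by
        intro j
        have h1 : Aᵀ.mulVec (y₀ + t • (-y')) j
            = Aᵀ.mulVec y₀ j - t * Aᵀ.mulVec y' j := by
          rw [Matrix.mulVec_add, Matrix.mulVec_smul]
          simp [smul_eq_mul, Matrix.mulVec_neg]
          ring
        have h2 : (0:ℝ) ≤ Aᵀ.mulVec y' j := hy'0 j
        have h3 : Aᵀ.mulVec y₀ j ≤ c j := hy₀ j
        rw [h1]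
        have : 0 ≤ t * Aᵀ.mulVec y' j := mul_nonneg ht0 h2
        simp only [Pi.le_def] at *
        linarith
      have hval : b ⬝ᵥ (y₀ + t • (-y')) = b ⬝ᵥ y₀ + t * q := by
        rw [dotProduct_add, dotProduct_smul]
        simp only [hq, smul_eq_mul, dotProduct_neg]
        try ring
      refine le_sSup_of_le ⟨y₀ + t • (-y'), hfeas, rfl⟩ ?_
      dsimp only
      rw [hval]
      exact_mod_cast htval
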